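/- Let n ≥ 1, let 0 ≤ j ≤ n−1 and let β, φ ∈ ℝ with sin(β + 2jπ/n) ≠ 0. Then ∏_{m=0, m≠j}^{n−1} |cos φ − cos(β + 2mπ/n)| ≤ 2n / (2^{n−1} · |sin(β + 2jπ/n)|). -/

import Mathlib

open Finset Real Polynomial

lemma aux_prod_root (n : ℕ) (hn : 0 < n) (z c : ℂ) :
    ∏ m ∈ range n, (z - Complex.exp (2*Real.pi*Complex.I/n) ^ m * c) = z ^ n - c ^ n := by
  have hζ := Complex.isPrimitiveRoot_exp n hn.ne'
  have h := X_pow_sub_C_eq_prod hζ hn (rfl : c ^ n = c ^ n)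
  have := congrArg (Polynomial.eval z) h
  simpa [Polynomial.eval_prod] using this.symm

lemma aux_factor (a b : ℂ) :
    2 * (Complex.cos a - Complex.cos b) =
      -Complex.exp (-(b*Complex.I)) * (Complex.exp (a*Complex.I) - Complex.exp (b*Complex.I)) *
        (Complex.exp (-(a*Complex.I)) - Complex.exp (b*Complex.I)) := by
  rw [Complex.cos, Complex.cos]
  simp only [neg_mul, Complex.exp_neg]
  have h1 := Complex.exp_ne_zero (a*Complex.I)
  have h2 := Complex.exp_ne_zero (b*Complex.I)
  field_simp
  ring

lemma aux_prodC (n : ℕ) (hn : 0 < n) (β φ : ℂ) :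
    ∏ m ∈ range n, (2 * (Complex.cos φ - Complex.cos (β + 2*m*Real.pi/n))) =
      2 * (Complex.cos (n*φ) - Complex.cos (n*β)) := by
  have hn' : (n:ℂ) ≠ 0 := Nat.cast_ne_zero.2 hn.ne'
  set u := Complex.exp (φ*Complex.I) with hu_def
  set w := Complex.exp (-(φ*Complex.I)) with hw_def
  set c := Complex.exp (β*Complex.I) with hc_def
  have hθ : ∀ m : ℕ, Complex.exp ((β + 2*m*Real.pi/n)*Complex.I)
      = Complex.exp (2*Real.pi*Complex.I/n) ^ m * c := by
    intro m
    rw [hc_def, ← Complex.exp_nat_mul, ← Complex.exp_add]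
    congr 1
    field_simp
    ring
  have h1 : ∏ m ∈ range n, (2 * (Complex.cos φ - Complex.cos (β + 2*m*Real.pi/n)))
      = ∏ m ∈ range n, ((-Complex.exp (-((β + 2*(m:ℂ)*Real.pi/n)*Complex.I))) *
          ((u - Complex.exp (2*Real.pi*Complex.I/n) ^ m * c) *
           (w - Complex.exp (2*Real.pi*Complex.I/n) ^ m * c))) :=
    Finset.prod_congr rfl fun m _ => by rw [aux_factor φ (β + 2*m*Real.pi/n), hθ m]; ring
  rw [h1, Finset.prod_mul_distrib, Finset.prod_mul_distrib,
    aux_prod_root n hn u c, aux_prod_root n hn w c]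
  have hg : (∑ m ∈ range n, (m:ℂ)) = n * ((n-1:ℕ):ℂ) / 2 := by
    rw [eq_div_iff (two_ne_zero)]
    have h0 := congrArg (Nat.cast : ℕ → ℂ) (Finset.sum_range_id_mul_two n)
    push_cast at h0
    exact h0
  have hE : ∏ m ∈ range n, (-Complex.exp (-((β + 2*(m:ℂ)*Real.pi/n)*Complex.I)))
      = -Complex.exp (-((n*β)*Complex.I)) := by
    have hstep : ∀ m ∈ range n, (-Complex.exp (-((β + 2*(m:ℂ)*Real.pi/n)*Complex.I)))
        = (-1) * Complex.exp (-((β + 2*(m:ℂ)*Real.pi/n)*Complex.I)) := fun m _ => by ring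
    rw [Finset.prod_congr rfl hstep, Finset.prod_mul_distrib, Finset.prod_const,
      Finset.card_range, ← Complex.exp_sum]
    have hsum : ∑ m ∈ range n, (-((β + 2*(m:ℂ)*Real.pi/n)*Complex.I))
        = -((n*β)*Complex.I) + -(((n-1:ℕ):ℂ)*(Real.pi*Complex.I)) := by
      have e1 : ∀ m ∈ range n, (-((β + 2*(m:ℂ)*Real.pi/n)*Complex.I))
          = -(β*Complex.I) + (-(2*Real.pi*Complex.I/n)) * (m:ℂ) := fun m _ => by ring
      rw [Finset.sum_congr rfl e1, Finset.sum_add_distrib, Finset.sum_const, Finset.card_range,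
        ← Finset.mul_sum, hg, nsmul_eq_mul]
      field_simp
    rw [hsum, Complex.exp_add]
    have hpi : Complex.exp (-(((n-1:ℕ):ℂ)*(Real.pi*Complex.I))) = (-1:ℂ)^(n-1) := by
      rw [Complex.exp_neg, show ((n-1:ℕ):ℂ)*(Real.pi*Complex.I) = ((n-1:ℕ):ℂ)*((Real.pi:ℂ)*Complex.I) from rfl,
        Complex.exp_nat_mul, Complex.exp_pi_mul_I]
      rw [← inv_pow, inv_neg, inv_one]
    rw [hpi]
    have hsign : (-1:ℂ)^n * (-1:ℂ)^(n-1) = -1 := by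
      rw [← pow_add]; exact Odd.neg_one_pow ⟨n-1, by omega⟩
    calc (-1:ℂ)^n * (Complex.exp (-((n*β)*Complex.I)) * (-1:ℂ)^(n-1))
        = ((-1:ℂ)^n * (-1:ℂ)^(n-1)) * Complex.exp (-((n*β)*Complex.I)) := by ring
      _ = -Complex.exp (-((n*β)*Complex.I)) := by rw [hsign]; ring
  rw [hE]
  have hun : u^n = Complex.exp (((n:ℂ)*φ)*Complex.I) := by
    rw [hu_def, ← Complex.exp_nat_mul]; ring_nf
  have hwn : w^n = Complex.exp (-(((n:ℂ)*φ)*Complex.I)) := by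
    rw [hw_def, ← Complex.exp_nat_mul]; ring_nf
  have hcn : c^n = Complex.exp (((n:ℂ)*β)*Complex.I) := by
    rw [hc_def, ← Complex.exp_nat_mul]; ring_nf
  rw [hun, hwn, hcn]
  linear_combination -1 * aux_factor ((n:ℂ)*φ) ((n:ℂ)*β)

lemma aux_prodR (n : ℕ) (hn : 0 < n) (β φ : ℝ) :
    ∏ m ∈ range n, (2 * (Real.cos φ - Real.cos (β + 2*m*Real.pi/n))) =
      2 * (Real.cos (n*φ) - Real.cos (n*β)) := by
  have h := aux_prodC n hn (β:ℂ) (φ:ℂ)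
  apply Complex.ofReal_injective
  push_cast [Complex.ofReal_cos]
  convert h using 2
lemma aux_sin_bound (n : ℕ) (x : ℝ) : |Real.sin (n * x)| ≤ n * |Real.sin x| := by
  induction n with
  | zero => simp
  | succ k ih =>
    have : ((k:ℝ)+1) * x = k*x + x := by ring
    push_cast
    rw [this, Real.sin_add]
    calc |Real.sin (k*x) * Real.cos x + Real.cos (k*x) * Real.sin x|
        ≤ |Real.sin (k*x) * Real.cos x| + |Real.cos (k*x) * Real.sin x| := abs_add_le _ _
      _ ≤ |Real.sin (k*x)| * 1 + 1 * |Real.sin x| := by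
          rw [abs_mul, abs_mul]
          gcongr
          · exact Real.abs_cos_le_one x
          · exact Real.abs_cos_le_one _
      _ = |Real.sin (k*x)| + |Real.sin x| := by ring
      _ ≤ (k:ℝ) * |Real.sin x| + |Real.sin x| := by linarith
      _ = ((k:ℝ)+1) * |Real.sin x| := by ring

lemma aux_key (n : ℕ) (φ θ : ℝ) :
    |Real.cos (n*φ) - Real.cos (n*θ)| * |Real.sin θ| ≤ 2 * n * |Real.cos φ - Real.cos θ| := by
  set a := (φ + θ) / 2 with ha
  set b := (φ - θ) / 2 with hb
  have h1 : Real.cos φ - Real.cos θ = -2 * Real.sin a * Real.sin b := Real.cos_sub_cos φ θ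
  have h2 : Real.cos (n*φ) - Real.cos (n*θ) = -2 * Real.sin (n*a) * Real.sin (n*b) := by
    have e := Real.cos_sub_cos ((n:ℝ)*φ) ((n:ℝ)*θ)
    rw [show ((n:ℝ)*φ + (n:ℝ)*θ)/2 = (n:ℝ)*a by rw [ha]; ring,
      show ((n:ℝ)*φ - (n:ℝ)*θ)/2 = (n:ℝ)*b by rw [hb]; ring] at e
    exact e
  have hθ : |Real.sin θ| ≤ |Real.sin a| + |Real.sin b| := by
    have : θ = a - b := by rw [ha, hb]; ring
    rw [this, Real.sin_sub]
    calc |Real.sin a * Real.cos b - Real.cos a * Real.sin b|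
        ≤ |Real.sin a * Real.cos b| + |Real.cos a * Real.sin b| := abs_sub _ _
      _ ≤ |Real.sin a| + |Real.sin b| := by
          rw [abs_mul, abs_mul]
          gcongr
          · nlinarith [Real.abs_cos_le_one b, abs_nonneg (Real.sin a), abs_nonneg (Real.cos b)]
          · nlinarith [Real.abs_cos_le_one a, abs_nonneg (Real.sin b), abs_nonneg (Real.cos a)]
  have hA := aux_sin_bound n a
  have hB := aux_sin_bound n b
  have hA1 : |Real.sin (n*a)| ≤ 1 := Real.abs_sin_le_one _
  have hB1 : |Real.sin (n*b)| ≤ 1 := Real.abs_sin_le_one _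
  rw [h1, h2]
  have e1 : |(-2) * Real.sin (n*a) * Real.sin (n*b)| = 2 * (|Real.sin (n*a)| * |Real.sin (n*b)|) := by
    rw [abs_mul, abs_mul]; simp [abs_of_nonneg]; ring
  have e2 : |(-2) * Real.sin a * Real.sin b| = 2 * (|Real.sin a| * |Real.sin b|) := by
    rw [abs_mul, abs_mul]; simp [abs_of_nonneg]; ring
  rw [e1, e2]
  have h3 : |Real.sin (n*a)| * |Real.sin (n*b)| * |Real.sin a| ≤ n * (|Real.sin a| * |Real.sin b|) := by
    calc |Real.sin (n*a)| * |Real.sin (n*b)| * |Real.sin a|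
        ≤ 1 * ((n:ℝ) * |Real.sin b|) * |Real.sin a| := by gcongr
      _ = (n:ℝ) * (|Real.sin a| * |Real.sin b|) := by ring
  have h4 : |Real.sin (n*a)| * |Real.sin (n*b)| * |Real.sin b| ≤ n * (|Real.sin a| * |Real.sin b|) := by
    calc |Real.sin (n*a)| * |Real.sin (n*b)| * |Real.sin b|
        ≤ ((n:ℝ) * |Real.sin a|) * 1 * |Real.sin b| := by gcongr
      _ = (n:ℝ) * (|Real.sin a| * |Real.sin b|) := by ring
  calc 2 * (|Real.sin (n*a)| * |Real.sin (n*b)|) * |Real.sin θ|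
      ≤ 2 * (|Real.sin (n*a)| * |Real.sin (n*b)|) * (|Real.sin a| + |Real.sin b|) := by
        gcongr
    _ = 2 * (|Real.sin (n*a)| * |Real.sin (n*b)| * |Real.sin a|) +
        2 * (|Real.sin (n*a)| * |Real.sin (n*b)| * |Real.sin b|) := by ring
    _ ≤ 2 * (n * (|Real.sin a| * |Real.sin b|)) + 2 * (n * (|Real.sin a| * |Real.sin b|)) := by
        linarith
    _ = 2 * n * (2 * (|Real.sin a| * |Real.sin b|)) := by ring

theorem stmt10 (n : ℕ) (hn : 1 ≤ n) (j : ℕ) (hj : j < n) (β φ : ℝ)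
    (hs : Real.sin (β + 2 * j * Real.pi / n) ≠ 0) :
    ∏ m ∈ (Finset.range n).erase j, |Real.cos φ - Real.cos (β + 2 * m * Real.pi / n)| ≤
      2 * n / (2 ^ (n - 1) * |Real.sin (β + 2 * j * Real.pi / n)|) := by
  have hn0 : 0 < n := hn
  have hnR : (n:ℝ) ≠ 0 := Nat.cast_ne_zero.2 hn0.ne'
  set θj := β + 2 * (j:ℝ) * Real.pi / n with hθj
  have hspos : 0 < |Real.sin θj| := abs_pos.2 hs
  have hppos : (0:ℝ) < 2 ^ (n - 1) * |Real.sin θj| := by positivity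
  have hjmem : j ∈ range n := mem_range.2 hj
  have hcosn : Real.cos ((n:ℝ) * θj) = Real.cos ((n:ℝ) * β) := by
    have : (n:ℝ) * θj = (n:ℝ) * β + (j:ℤ) * (2 * Real.pi) := by
      rw [hθj]; field_simp; push_cast; ring
    rw [this, Real.cos_add_int_mul_two_pi]
  -- main estimate for any t with cos t ≠ cos θj
  have hstep : ∀ t : ℝ, Real.cos t ≠ Real.cos θj →
      ∏ m ∈ (Finset.range n).erase j, |Real.cos t - Real.cos (β + 2 * m * Real.pi / n)| ≤
        2 * n / (2 ^ (n - 1) * |Real.sin θj|) := by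
    intro t ht
    set P := ∏ m ∈ (Finset.range n).erase j, |Real.cos t - Real.cos (β + 2 * m * Real.pi / n)| with hP
    have hprod := aux_prodR n hn0 β t
    have habs : ∏ m ∈ range n, (2 * |Real.cos t - Real.cos (β + 2 * m * Real.pi / n)|)
        = 2 * |Real.cos ((n:ℝ)*t) - Real.cos ((n:ℝ)*β)| := by
      have h1 : ∀ m ∈ range n, 2 * |Real.cos t - Real.cos (β + 2 * (m:ℝ) * Real.pi / n)|
          = |2 * (Real.cos t - Real.cos (β + 2 * (m:ℝ) * Real.pi / n))| := fun m _ => by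
        rw [abs_mul, abs_two]
      rw [Finset.prod_congr rfl h1, ← Finset.abs_prod, hprod, abs_mul, abs_two]
    have hsplit : (2 * |Real.cos t - Real.cos θj|) *
        ∏ m ∈ (range n).erase j, (2 * |Real.cos t - Real.cos (β + 2 * m * Real.pi / n)|)
        = ∏ m ∈ range n, (2 * |Real.cos t - Real.cos (β + 2 * m * Real.pi / n)|) := by
      have h := Finset.mul_prod_erase (range n)
        (fun m => 2 * |Real.cos t - Real.cos (β + 2 * (m:ℝ) * Real.pi / n)|) hjmem
      exact h
    have herase : ∏ m ∈ (range n).erase j, (2 * |Real.cos t - Real.cos (β + 2 * m * Real.pi / n)|)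
        = 2 ^ (n-1) * P := by
      rw [hP, Finset.prod_mul_distrib, Finset.prod_const, Finset.card_erase_of_mem hjmem,
        Finset.card_range]
    have hE : |Real.cos t - Real.cos θj| * (2 ^ (n-1) * P)
        = |Real.cos ((n:ℝ)*t) - Real.cos ((n:ℝ)*β)| := by
      have := hsplit
      rw [herase, habs] at this
      linarith [this]
    have hkey := aux_key n t θj
    rw [hcosn] at hkey
    have hΔ : 0 < |Real.cos t - Real.cos θj| := abs_pos.2 (sub_ne_zero.2 ht)
    rw [le_div_iff₀ hppos]
    have hfin : P * (2 ^ (n-1) * |Real.sin θj|) * |Real.cos t - Real.cos θj|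
        ≤ 2 * n * |Real.cos t - Real.cos θj| := by
      calc P * (2 ^ (n-1) * |Real.sin θj|) * |Real.cos t - Real.cos θj|
          = (|Real.cos t - Real.cos θj| * (2 ^ (n-1) * P)) * |Real.sin θj| := by ring
        _ = |Real.cos ((n:ℝ)*t) - Real.cos ((n:ℝ)*β)| * |Real.sin θj| := by rw [hE]
        _ ≤ 2 * n * |Real.cos t - Real.cos θj| := hkey
    exact le_of_mul_le_mul_right hfin hΔ
  by_cases hc : Real.cos φ = Real.cos θj
  · -- continuity argument
    have hsφ : Real.sin φ ≠ 0 := by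
      intro h0
      apply hs
      have h1 := Real.sin_sq_add_cos_sq φ
      have h2 := Real.sin_sq_add_cos_sq θj
      have h3 : Real.sin θj ^ 2 = 0 := by
        rw [← hc] at h2; nlinarith
      exact pow_eq_zero_iff (two_ne_zero) |>.1 h3
    have hd : HasDerivAt Real.cos (-Real.sin φ) φ := Real.hasDerivAt_cos φ
    have hne : ∀ᶠ z in nhdsWithin φ {φ}ᶜ, Real.cos z ≠ Real.cos φ :=
      hd.eventually_ne (by simpa using hsφ)
    have hcont : Continuous fun t : ℝ =>
        ∏ m ∈ (Finset.range n).erase j, |Real.cos t - Real.cos (β + 2 * m * Real.pi / n)| :=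
      continuous_finset_prod _ fun m _ => (Real.continuous_cos.sub continuous_const).abs
    have htend : Filter.Tendsto (fun t : ℝ =>
        ∏ m ∈ (Finset.range n).erase j, |Real.cos t - Real.cos (β + 2 * m * Real.pi / n)|)
        (nhdsWithin φ {φ}ᶜ)
        (nhds (∏ m ∈ (Finset.range n).erase j, |Real.cos φ - Real.cos (β + 2 * m * Real.pi / n)|)) :=
      hcont.continuousAt.tendsto.mono_left nhdsWithin_le_nhds
    refine le_of_tendsto htend ?_
    filter_upwards [hne] with z hz
    exact hstep z (fun h => hz (h.trans hc.symm))
  · exact hstep φ hc
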